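/- Let G ∈ ℝ^{N×N} be symmetric and positive definite, and let t₀ > 0. Then every trajectory q : [t₀, ∞) → ℝ^N of the NAGD game dynamics q''(t) + (3/t) q'(t) + G q(t) = 0 satisfies q(t) → 0 and q'(t) → 0 as t → ∞. -/

import Mathlib

open Filter

open Matrix

lemma hasDerivAt_dotProduct' {N : ℕ} {f g : ℝ → Fin N → ℝ} {f' g' : Fin N → ℝ} {t : ℝ}
    (hf : HasDerivAt f f' t) (hg : HasDerivAt g g' t) :
    HasDerivAt (fun s => dotProduct (f s) (g s))
      (dotProduct f' (g t) + dotProduct (f t) g') t := by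
  have h : HasDerivAt (fun s => ∑ i, f s i * g s i)
      (∑ i, (f' i * g t i + f t i * g' i)) t :=
    HasDerivAt.fun_sum fun i _ => ((hasDerivAt_pi.mp hf i).mul (hasDerivAt_pi.mp hg i))
  simpa [dotProduct, Finset.sum_add_distrib] using h

lemma hasDerivAt_mulVec' {N : ℕ} (G : Matrix (Fin N) (Fin N) ℝ) {f : ℝ → Fin N → ℝ}
    {f' : Fin N → ℝ} {t : ℝ} (hf : HasDerivAt f f' t) :
    HasDerivAt (fun s => G.mulVec (f s)) (G.mulVec f') t := by
  rw [hasDerivAt_pi]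
  intro i
  have h : HasDerivAt (fun s => ∑ j, G i j * f s j) (∑ j, G i j * f' j) t :=
    HasDerivAt.fun_sum fun j _ => (hasDerivAt_pi.mp hf j).const_mul (G i j)
  simpa [Matrix.mulVec, dotProduct] using h

lemma dot_self_nonneg' {N : ℕ} (x : Fin N → ℝ) : 0 ≤ dotProduct x x :=
  Finset.sum_nonneg fun i _ => mul_self_nonneg _

lemma exists_mu' {N : ℕ} (hN : 0 < N) (G : Matrix (Fin N) (Fin N) ℝ)
    (hpd : ∀ x : Fin N → ℝ, x ≠ 0 → 0 < dotProduct x (G.mulVec x)) :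
    ∃ μ > 0, ∀ y : Fin N → ℝ, μ * ‖y‖ ^ 2 ≤ dotProduct y (G.mulVec y) := by
  haveI : Nonempty (Fin N) := ⟨⟨0, hN⟩⟩
  have hcont : Continuous fun x : Fin N → ℝ => dotProduct x (G.mulVec x) := by
    simp only [dotProduct, Matrix.mulVec]
    exact continuous_finset_sum _ fun i _ => (continuous_apply i).mul
      (continuous_finset_sum _ fun j _ => continuous_const.mul (continuous_apply j))
  have hne : (Metric.sphere (0 : Fin N → ℝ) 1).Nonempty := by
    refine ⟨fun _ => 1, ?_⟩
    simp [mem_sphere_iff_norm]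
  obtain ⟨x₀, hx₀S, hmin⟩ := (isCompact_sphere (0 : Fin N → ℝ) 1).exists_isMinOn hne
    hcont.continuousOn
  have hx₀norm : ‖x₀‖ = 1 := by simpa using hx₀S
  have hx₀ne : x₀ ≠ 0 := by
    intro h; rw [h] at hx₀norm; simp at hx₀norm
  refine ⟨dotProduct x₀ (G.mulVec x₀), hpd x₀ hx₀ne, fun y => ?_⟩
  by_cases hy : y = 0
  · simp [hy]
  · have hcpos : 0 < ‖y‖ := norm_pos_iff.mpr hy
    have hz : (‖y‖⁻¹ • y) ∈ Metric.sphere (0 : Fin N → ℝ) 1 := by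
      simp [mem_sphere_iff_norm, norm_smul, abs_of_pos (inv_pos.mpr hcpos),
        inv_mul_cancel₀ hcpos.ne']
    have h1 : dotProduct x₀ (G.mulVec x₀) ≤ dotProduct (‖y‖⁻¹ • y) (G.mulVec (‖y‖⁻¹ • y)) := hmin hz
    have h2 : dotProduct (‖y‖⁻¹ • y) (G.mulVec (‖y‖⁻¹ • y))
        = ‖y‖⁻¹ * (‖y‖⁻¹ * dotProduct y (G.mulVec y)) := by
      rw [Matrix.mulVec_smul, smul_dotProduct, dotProduct_smul]
      simp [smul_eq_mul]
    rw [h2] at h1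
    have hy2 : (0:ℝ) < ‖y‖ ^ 2 := by positivity
    have h3 := mul_le_mul_of_nonneg_left h1 hy2.le
    have h4 : ‖y‖ ^ 2 * (‖y‖⁻¹ * (‖y‖⁻¹ * dotProduct y (G.mulVec y)))
        = dotProduct y (G.mulVec y) := by
      field_simp
    rw [h4] at h3
    linarith


/-- NAGD game dynamics: `q` is a twice continuously differentiable trajectory with
velocity `v = q'` satisfying `q'' + (3/t) q' + G q = 0` on `[t₀, ∞)`. -/
def IsNAGDTrajectory {N : ℕ} (G : Matrix (Fin N) (Fin N) ℝ) (t₀ : ℝ)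
    (q v : ℝ → Fin N → ℝ) : Prop :=
  (∀ t, t₀ ≤ t → HasDerivAt q (v t) t) ∧
  (∀ t, t₀ ≤ t → HasDerivAt v (-(3 / t) • v t - G.mulVec (q t)) t)

/-- for `G` symmetric positive definite, every NAGD trajectory satisfies
`q(t) → 0` and `q'(t) → 0` as `t → ∞`. -/
theorem stmt_9 {N : ℕ} (G : Matrix (Fin N) (Fin N) ℝ) (hsymm : G.transpose = G)
    (hpd : ∀ x : Fin N → ℝ, x ≠ 0 → 0 < dotProduct x (G.mulVec x))
    (t₀ : ℝ) (ht₀ : 0 < t₀)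
    (q v : ℝ → Fin N → ℝ) (htraj : IsNAGDTrajectory G t₀ q v) :
    Tendsto q atTop (nhds 0) ∧ Tendsto v atTop (nhds 0) := by
  obtain ⟨hq, hv⟩ := htraj
  rcases Nat.eq_zero_or_pos N with hN | hN
  · subst hN
    have hq0 : q = fun _ => 0 := funext fun t => Subsingleton.elim _ _
    have hv0 : v = fun _ => 0 := funext fun t => Subsingleton.elim _ _
    rw [hq0, hv0]
    exact ⟨tendsto_const_nhds, tendsto_const_nhds⟩
  set A : ℝ → ℝ := fun s => dotProduct (q s) (G.mulVec (q s)) with hAdef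
  set w : ℝ → Fin N → ℝ := fun s => (2:ℝ) • q s + s • v s with hwdef
  set W : ℝ → ℝ := fun s => s ^ 2 * A s + dotProduct (w s) (w s) with hWdef
  have hApos : ∀ s, 0 ≤ A s := by
    intro s
    by_cases h : q s = 0
    · simp [hAdef, h]
    · exact (hpd _ h).le
  have hdsymm : ∀ x y : Fin N → ℝ,
      dotProduct x (G.mulVec y) = dotProduct y (G.mulVec x) := by
    intro x y
    rw [Matrix.dotProduct_mulVec, ← Matrix.mulVec_transpose, hsymm, dotProduct_comm]
  have hWd : ∀ s, t₀ ≤ s → HasDerivAt W (-(2 * s * A s)) s := by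
    intro s hs
    have hspos : 0 < s := lt_of_lt_of_le ht₀ hs
    have hqd := hq s hs
    have hvd := hv s hs
    have hGq := hasDerivAt_mulVec' G hqd
    have hAd : HasDerivAt A
        (dotProduct (v s) (G.mulVec (q s)) + dotProduct (q s) (G.mulVec (v s))) s := by
      rw [hAdef]
      exact hasDerivAt_dotProduct' hqd hGq
    have hwd : HasDerivAt w (-(s • G.mulVec (q s))) s := by
      rw [hwdef]
      have h := (hqd.const_smul (2:ℝ)).add ((hasDerivAt_id s).smul hvd)
      refine HasDerivAt.congr_deriv h ?_
      funext i
      simp only [Pi.smul_apply, Pi.add_apply, Pi.sub_apply, Pi.neg_apply, smul_eq_mul,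
        id_eq, one_mul, one_smul]
      field_simp
      ring
    have hW1 : HasDerivAt (fun u => u ^ 2 * A u)
        ((2 * s) * A s + s ^ 2 * (dotProduct (v s) (G.mulVec (q s))
          + dotProduct (q s) (G.mulVec (v s)))) s := by
      have hp : HasDerivAt (fun u : ℝ => u ^ 2) (2 * s) s := by
        simpa using hasDerivAt_pow 2 s
      exact hp.mul hAd
    have hW2 := hasDerivAt_dotProduct' hwd hwd
    have hsum := hW1.add hW2
    rw [hWdef]
    refine HasDerivAt.congr_deriv hsum ?_
    simp only [hAdef, hwdef, dotProduct_add, add_dotProduct,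
      smul_dotProduct, dotProduct_smul, neg_dotProduct,
      dotProduct_neg, smul_eq_mul]
    rw [dotProduct_comm (G.mulVec (q s)) (q s),
      dotProduct_comm (G.mulVec (q s)) (v s), hdsymm (q s) (v s)]
    ring
  have hcont : ContinuousOn W (Set.Ici t₀) :=
    fun s hs => ((hWd s hs).continuousAt).continuousWithinAt
  have hdiff : DifferentiableOn ℝ W (interior (Set.Ici t₀)) := by
    intro s hs
    rw [interior_Ici] at hs
    exact ((hWd s (le_of_lt hs)).differentiableAt).differentiableWithinAt
  have hder : ∀ s ∈ interior (Set.Ici t₀), deriv W s ≤ 0 := by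
    intro s hs
    rw [interior_Ici] at hs
    rw [(hWd s (le_of_lt hs)).deriv]
    have h1 := hApos s
    have h2 : (0:ℝ) < s := ht₀.trans hs
    nlinarith
  have hmono := antitoneOn_of_deriv_nonpos (convex_Ici t₀) hcont hdiff hder
  have hWle : ∀ s, t₀ ≤ s → W s ≤ W t₀ := fun s hs => hmono Set.self_mem_Ici hs hs
  obtain ⟨μ, hμpos, hμ⟩ := exists_mu' hN G hpd
  set C := W t₀ with hCdef
  have hCnn : 0 ≤ C := by
    have h1 := hApos t₀
    have h2 := dot_self_nonneg' (w t₀)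
    simp only [hCdef, hWdef]
    nlinarith
  have hAle : ∀ s, t₀ ≤ s → s ^ 2 * A s ≤ C := by
    intro s hs
    have h1 := hWle s hs
    have h2 := dot_self_nonneg' (w s)
    simp only [hWdef] at h1
    linarith
  have hdotw : ∀ s, t₀ ≤ s → dotProduct (w s) (w s) ≤ C := by
    intro s hs
    have h1 := hWle s hs
    have h2 := hApos s
    have h3 : (0:ℝ) ≤ s ^ 2 := sq_nonneg s
    simp only [hWdef] at h1
    nlinarith
  have hqbound : ∀ s, t₀ ≤ s → ‖q s‖ ≤ Real.sqrt (C / μ) / s := by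
    intro s hs
    have hspos : 0 < s := lt_of_lt_of_le ht₀ hs
    have h1 := hAle s hs
    have h2 := hμ (q s)
    have h3 : (‖q s‖ * s) ^ 2 ≤ C / μ := by
      rw [le_div_iff₀ hμpos]
      nlinarith [sq_nonneg (‖q s‖ * s)]
    have h4 : ‖q s‖ * s ≤ Real.sqrt (C / μ) :=
      (Real.le_sqrt (mul_nonneg (norm_nonneg _) hspos.le)
        (div_nonneg hCnn hμpos.le)).mpr h3
    rw [le_div_iff₀ hspos]
    exact h4
  have hqt : Tendsto q atTop (nhds 0) := by
    rw [tendsto_zero_iff_norm_tendsto_zero]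
    refine squeeze_zero' (Filter.Eventually.of_forall fun s => norm_nonneg _)
      (eventually_atTop.mpr ⟨t₀, hqbound⟩) ?_
    exact tendsto_const_nhds.div_atTop tendsto_id
  refine ⟨hqt, ?_⟩
  have hwbound : ∀ s, t₀ ≤ s → ‖w s‖ ≤ Real.sqrt C := by
    intro s hs
    have h1 := hdotw s hs
    rw [pi_norm_le_iff_of_nonneg (Real.sqrt_nonneg _)]
    intro i
    have h2 : w s i * w s i ≤ dotProduct (w s) (w s) :=
      Finset.single_le_sum (f := fun j => w s j * w s j)
        (fun j _ => mul_self_nonneg _) (Finset.mem_univ i)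
    have h3 : (w s i) ^ 2 ≤ C := by nlinarith
    rw [Real.norm_eq_abs]
    exact Real.abs_le_sqrt h3
  have hvbound : ∀ s, t₀ ≤ s →
      ‖v s‖ ≤ (Real.sqrt C + 2 * (Real.sqrt (C / μ) / t₀)) / s := by
    intro s hs
    have hspos : 0 < s := lt_of_lt_of_le ht₀ hs
    have hveq : v s = s⁻¹ • (w s - (2:ℝ) • q s) := by
      rw [hwdef]
      funext i
      simp only [Pi.smul_apply, Pi.sub_apply, Pi.add_apply, smul_eq_mul]
      field_simp
      ring
    have h1 : ‖v s‖ ≤ s⁻¹ * (‖w s‖ + 2 * ‖q s‖) := by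
      rw [hveq, norm_smul, Real.norm_eq_abs, abs_of_pos (inv_pos.mpr hspos)]
      have h2 : ‖w s - (2:ℝ) • q s‖ ≤ ‖w s‖ + 2 * ‖q s‖ := by
        calc ‖w s - (2:ℝ) • q s‖ ≤ ‖w s‖ + ‖(2:ℝ) • q s‖ := norm_sub_le _ _
          _ = ‖w s‖ + 2 * ‖q s‖ := by rw [norm_smul]; simp
      exact mul_le_mul_of_nonneg_left h2 (inv_pos.mpr hspos).le
    have h3 : ‖q s‖ ≤ Real.sqrt (C / μ) / t₀ := by
      have := hqbound s hs
      have h4 : Real.sqrt (C / μ) / s ≤ Real.sqrt (C / μ) / t₀ :=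
        div_le_div_of_nonneg_left (Real.sqrt_nonneg _) ht₀ hs
      linarith
    have h5 := hwbound s hs
    calc ‖v s‖ ≤ s⁻¹ * (‖w s‖ + 2 * ‖q s‖) := h1
      _ ≤ s⁻¹ * (Real.sqrt C + 2 * (Real.sqrt (C / μ) / t₀)) := by
          apply mul_le_mul_of_nonneg_left _ (inv_pos.mpr hspos).le
          linarith
      _ = (Real.sqrt C + 2 * (Real.sqrt (C / μ) / t₀)) / s := by
          ring
  rw [tendsto_zero_iff_norm_tendsto_zero]
  refine squeeze_zero' (Filter.Eventually.of_forall fun s => norm_nonneg _)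
    (eventually_atTop.mpr ⟨t₀, hvbound⟩) ?_
  exact tendsto_const_nhds.div_atTop tendsto_id
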